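/- With X_1,...,X_M i.i.d. with mean m and variance σ², partition {1,...,M} into cells with n nonempty cells, Y = ∑ over nonempty cells of the cell-average, S = ∑ X_u: the minimizer over β ∈ ℝ of the mean square error E[(Y − βS)²] among estimators of the form βS is β* = E[YS]/E[S²] = n/M, provided M m² + σ² > 0. -/

import Mathlib

open MeasureTheory Finset

lemma memLp_mul_integrable {Ω : Type*} [MeasurableSpace Ω] {μ : Measure Ω}
    {f g : Ω → ℝ} (hf : MemLp f 2 μ) (hg : MemLp g 2 μ) :
    Integrable (fun ω => f ω * g ω) μ := by
  refine Integrable.mono' ((hf.integrable_sq.add hg.integrable_sq).const_mul (1/2))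
    (hf.aestronglyMeasurable.mul hg.aestronglyMeasurable) (Filter.Eventually.of_forall fun ω => ?_)
  simp only [Real.norm_eq_abs, Pi.add_apply]
  rw [abs_mul]
  nlinarith [sq_nonneg (|f ω| - |g ω|), abs_nonneg (f ω), abs_nonneg (g ω), sq_abs (f ω), sq_abs (g ω)]

/-- MMSE estimator: with `X₁,…,X_M` i.i.d. (mean `m`, variance `σ²`), a
partition of `{1,…,M}` with `n` nonempty cells, `Y` the sum of cell averages
and `S` the total sum, the minimizer over `β ∈ ℝ` of `E[(Y − β S)²]` is
`β* = E[Y S]/E[S²] = n/M`, provided `M m² + σ² > 0`. -/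
theorem mmse_optimal_estimator
    {Ω : Type*} [MeasurableSpace Ω] (μ : Measure Ω) [IsProbabilityMeasure μ]
    (M : ℕ) (hM : 0 < M) (X : Fin M → Ω → ℝ)
    (hmeas : ∀ u, Measurable (X u))
    (hindep : ProbabilityTheory.iIndepFun X μ)
    (hident : ∀ u v, ProbabilityTheory.IdentDistrib (X u) (X v) μ μ)
    (hL2 : ∀ u, MemLp (X u) 2 μ)
    (m σ : ℝ)
    (hmean : ∀ u, ∫ ω, X u ω ∂μ = m)
    (hvar : ∀ u, ProbabilityTheory.variance (X u) μ = σ ^ 2)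
    (hpos : (M : ℝ) * m ^ 2 + σ ^ 2 > 0)
    {L : Type*} [Fintype L] [DecidableEq L]
    (U : L → Finset (Fin M))
    (hdisj : ∀ i j, i ≠ j → Disjoint (U i) (U j))
    (hcover : Finset.univ.biUnion U = Finset.univ)
    (n : ℕ) (hn : n = (Finset.univ.filter (fun i => (U i).Nonempty)).card)
    (Y S : Ω → ℝ)
    (hY : Y = fun ω => ∑ i ∈ Finset.univ.filter (fun i => (U i).Nonempty),
            (1 / ((U i).card : ℝ)) * ∑ u ∈ U i, X u ω)
    (hS : S = fun ω => ∑ u, X u ω) :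
    (∀ β : ℝ, ∫ ω, (Y ω - ((n : ℝ) / (M : ℝ)) * S ω) ^ 2 ∂μ
        ≤ ∫ ω, (Y ω - β * S ω) ^ 2 ∂μ) ∧
    (∫ ω, Y ω * S ω ∂μ) / (∫ ω, (S ω) ^ 2 ∂μ) = (n : ℝ) / (M : ℝ) := by
  -- basic integrability facts
  have hXXint : ∀ u v : Fin M, Integrable (fun ω => X u ω * X v ω) μ :=
    fun u v => memLp_mul_integrable (hL2 u) (hL2 v)
  -- second moments
  have hEXX : ∀ u v : Fin M, (∫ ω, X u ω * X v ω ∂μ)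
      = if u = v then σ ^ 2 + m ^ 2 else m ^ 2 := by
    intro u v
    by_cases huv : u = v
    · subst huv
      have hv := ProbabilityTheory.variance_eq_sub (hL2 u)
      rw [hvar u, hmean u] at hv
      have h2 : (∫ ω, X u ω * X u ω ∂μ) = ∫ ω, (X u ^ 2) ω ∂μ := by
        congr 1; funext ω; simp [pow_two]
      rw [if_pos rfl, h2]; linarith
    · have hind := hindep.indepFun huv
      rw [if_neg huv]
      have := ProbabilityTheory.IndepFun.integral_mul_eq_mul_integral hind (hL2 u).aestronglyMeasurable
        (hL2 v).aestronglyMeasurable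
      calc (∫ ω, X u ω * X v ω ∂μ) = ∫ ω, (X u * X v) ω ∂μ := by rfl
        _ = (∫ ω, X u ω ∂μ) * ∫ ω, X v ω ∂μ := this
        _ = m ^ 2 := by rw [hmean u, hmean v]; ring
  -- E[S^2]
  have hrow : ∀ u : Fin M, (∑ v : Fin M, ∫ ω, X u ω * X v ω ∂μ)
      = (M : ℝ) * m ^ 2 + σ ^ 2 := by
    intro u
    simp only [hEXX]
    have h : ∀ x : Fin M, (if u = x then σ ^ 2 + m ^ 2 else m ^ 2)
        = m ^ 2 + (if u = x then σ ^ 2 else 0) := by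
      intro x; split <;> ring
    simp only [h, Finset.sum_add_distrib, Finset.sum_const, Finset.card_univ,
      Finset.sum_ite_eq, Finset.mem_univ, if_pos, Fintype.card_fin, nsmul_eq_mul]
  have hES2 : (∫ ω, (S ω) ^ 2 ∂μ) = (M : ℝ) * ((M : ℝ) * m ^ 2 + σ ^ 2) := by
    have h1 : (fun ω => (S ω) ^ 2) = fun ω => ∑ u : Fin M, ∑ v : Fin M, X u ω * X v ω := by
      funext ω; rw [hS]; rw [pow_two, Finset.sum_mul_sum]
    rw [h1]
    rw [integral_finset_sum _ (fun u _ => integrable_finset_sum _ (fun v _ => hXXint u v))]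
    have : ∀ u ∈ Finset.univ, (∫ ω, ∑ v : Fin M, X u ω * X v ω ∂μ)
        = (M : ℝ) * m ^ 2 + σ ^ 2 := by
      intro u _
      rw [integral_finset_sum _ (fun v _ => hXXint u v)]
      exact hrow u
    rw [Finset.sum_congr rfl this]
    simp [Finset.card_univ]
    ring
  -- E[Y S]
  have hEYS : (∫ ω, Y ω * S ω ∂μ) = (n : ℝ) * ((M : ℝ) * m ^ 2 + σ ^ 2) := by
    have h1 : (fun ω => Y ω * S ω)
        = fun ω => ∑ i ∈ Finset.univ.filter (fun i => (U i).Nonempty),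
            (1 / ((U i).card : ℝ)) * ∑ u ∈ U i, ∑ v : Fin M, X u ω * X v ω := by
      funext ω; rw [hY, hS]
      rw [Finset.sum_mul]
      refine Finset.sum_congr rfl fun i _ => ?_
      rw [mul_assoc, Finset.sum_mul]
      congr 1
      refine Finset.sum_congr rfl fun u _ => ?_
      rw [Finset.mul_sum]
    rw [h1]
    rw [integral_finset_sum _ (fun i _ => (integrable_finset_sum _
      (fun u _ => integrable_finset_sum _ (fun v _ => hXXint u v))).const_mul _)]
    have h2 : ∀ i ∈ Finset.univ.filter (fun i => (U i).Nonempty),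
        (∫ ω, (1 / ((U i).card : ℝ)) * ∑ u ∈ U i, ∑ v : Fin M, X u ω * X v ω ∂μ)
        = (M : ℝ) * m ^ 2 + σ ^ 2 := by
      intro i hi
      rw [Finset.mem_filter] at hi
      have hcard : (0 : ℝ) < (U i).card := by
        exact_mod_cast Finset.card_pos.mpr hi.2
      rw [integral_const_mul]
      rw [integral_finset_sum _ (fun u _ => integrable_finset_sum _ (fun v _ => hXXint u v))]
      have : ∀ u ∈ U i, (∫ ω, ∑ v : Fin M, X u ω * X v ω ∂μ)
          = (M : ℝ) * m ^ 2 + σ ^ 2 := by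
        intro u _
        rw [integral_finset_sum _ (fun v _ => hXXint u v)]
        exact hrow u
      rw [Finset.sum_congr rfl this, Finset.sum_const, nsmul_eq_mul]
      field_simp
    rw [Finset.sum_congr rfl h2, Finset.sum_const, nsmul_eq_mul, hn]
  -- MemLp for Y and S
  have hSL2 : MemLp S 2 μ := by
    rw [hS]
    exact memLp_finset_sum _ (fun u _ => hL2 u)
  have hYL2 : MemLp Y 2 μ := by
    rw [hY]
    refine memLp_finset_sum _ (fun i _ => ?_)
    exact (memLp_finset_sum _ (fun u _ => hL2 u)).const_mul _
  have hYSint : Integrable (fun ω => Y ω * S ω) μ := memLp_mul_integrable hYL2 hSL2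
  have hY2int : Integrable (fun ω => (Y ω) ^ 2) μ := hYL2.integrable_sq
  have hS2int : Integrable (fun ω => (S ω) ^ 2) μ := hSL2.integrable_sq
  -- expansion of MSE
  have expand : ∀ β : ℝ, (∫ ω, (Y ω - β * S ω) ^ 2 ∂μ)
      = (∫ ω, (Y ω) ^ 2 ∂μ) - 2 * β * (∫ ω, Y ω * S ω ∂μ) + β ^ 2 * ∫ ω, (S ω) ^ 2 ∂μ := by
    intro β
    have h1 : (fun ω => (Y ω - β * S ω) ^ 2)
        = fun ω => (Y ω) ^ 2 - (2 * β) * (Y ω * S ω) + β ^ 2 * (S ω) ^ 2 := by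
      funext ω; ring
    have i1 : Integrable (fun ω => Y ω ^ 2 - 2 * β * (Y ω * S ω)) μ :=
      hY2int.sub (hYSint.const_mul _)
    have i2 : Integrable (fun ω => β ^ 2 * (S ω) ^ 2) μ := hS2int.const_mul _
    have i3 : Integrable (fun ω => 2 * β * (Y ω * S ω)) μ := hYSint.const_mul _
    rw [h1, integral_add i1 i2, integral_sub hY2int i3, integral_const_mul, integral_const_mul]
  have hB : (0 : ℝ) < ∫ ω, (S ω) ^ 2 ∂μ := by
    rw [hES2]
    positivity
  have hratio : (∫ ω, Y ω * S ω ∂μ) / (∫ ω, (S ω) ^ 2 ∂μ) = (n : ℝ) / (M : ℝ) := by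
    have hM' : (0 : ℝ) < (M : ℝ) := by exact_mod_cast hM
    rw [hEYS, hES2]
    rw [div_eq_div_iff (by positivity) hM'.ne']
    ring
  refine ⟨fun β => ?_, hratio⟩
  rw [expand β, expand ((n : ℝ) / (M : ℝ))]
  have hA : (∫ ω, Y ω * S ω ∂μ) = ((n : ℝ) / (M : ℝ)) * ∫ ω, (S ω) ^ 2 ∂μ := by
    have hM' : (0 : ℝ) < (M : ℝ) := by exact_mod_cast hM
    rw [hEYS, hES2]
    field_simp
  rw [hA]
  nlinarith [sq_nonneg (β - (n : ℝ) / (M : ℝ)), hB, sq_nonneg β]
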